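/- If α : V → X → Set (Set X) is a V-tower for the up-set monad (each α a x is an up-set and (K0), (K1), (K2) hold), then γ_α : V → Set X → Set X defined by γ_α a A = {x | Aᶜ ∉ α a x} is a V-graded closure operator (satisfies (Γ1), (Γ2), (Γ3), (Γ4)). -/

import Mathlib

/-- `b` is totally below `a`: every set whose supremum dominates `a` contains an
element dominating `b`. -/
def totallyBelow {V : Type*} [CompleteLattice V] (b a : V) : Prop :=
  ∀ S : Set V, a ≤ sSup S → ∃ s ∈ S, b ≤ s

lemma le_sSup_totallyBelow {V : Type*} [CompletelyDistribLattice V] (a : V) :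
    a ≤ sSup {b | totallyBelow b a} := by
  have h := iInf_iSup_eq (f := fun (S : {S : Set V // a ≤ sSup S}) (j : S.1) => (j : V))
  have h1 : a ≤ ⨅ S : {S : Set V // a ≤ sSup S}, ⨆ j : S.1, (j : V) := by
    refine le_iInf fun S => ?_
    rw [← sSup_eq_iSup']
    exact S.2
  rw [h] at h1
  refine h1.trans (iSup_le fun g => le_sSup ?_)
  intro T hT
  exact ⟨g ⟨T, hT⟩, (g ⟨T, hT⟩).2, iInf_le _ (⟨T, hT⟩ : {S : Set V // a ≤ sSup S})⟩

/-- If `α` is a `V`-tower for the up-set monad, then `γ_α a A = {x | Aᶜ ∉ α a x}` is a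
`V`-graded closure operator: (Γ1)–(Γ4) hold. -/
theorem graded_closure_of_upset_tower
    {V : Type*} [CompletelyDistribLattice V] [Monoid V]
    (hl : ∀ (a : V) (S : Set V), a * sSup S = ⨆ s ∈ S, a * s)
    (hr : ∀ (a : V) (S : Set V), sSup S * a = ⨆ s ∈ S, s * a)
    (hnt : (⊥ : V) ≠ 1)
    {X : Type*} (α : V → X → Set (Set X))
    (hup : ∀ (a : V) (x : X) (A B : Set X), A ∈ α a x → A ⊆ B → B ∈ α a x)
    (hK0 : ∀ (S : Set V) (x : X), α (sSup S) x = ⋃ a ∈ S, α a x)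
    (hK1 : ∀ (x : X) (A : Set X), A ∈ α 1 x → x ∈ A)
    (hK2 : ∀ (a b : V) (x : X) (A : Set X),
      A ∈ α (a * b) x → {y | A ∈ α a y} ∈ α b x) :
    (∀ (a : V) (A : Set X), a ≤ 1 → A ⊆ {x | Aᶜ ∉ α a x})
    ∧ (∀ (a : V) (A B : Set X), A ⊆ B → {x | Aᶜ ∉ α a x} ⊆ {x | Bᶜ ∉ α a x})
    ∧ (∀ (a b : V) (A : Set X),
        {x | {y | Aᶜ ∉ α a y}ᶜ ∉ α b x} ⊆ {x | Aᶜ ∉ α (a * b) x})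
    ∧ (∀ (a : V) (A : Set X),
        {x | Aᶜ ∉ α a x} = ⋂ b, ⋂ (_ : totallyBelow b a), {x | Aᶜ ∉ α b x}) := by
  -- monotonicity of α in the grade
  have hmono : ∀ (a b : V) (x : X), a ≤ b → α a x ⊆ α b x := by
    intro a b x hab A hA
    have h := hK0 {a, b} x
    have hs : sSup ({a, b} : Set V) = b := by
      rw [sSup_pair, sup_eq_right.mpr hab]
    rw [hs] at h
    rw [h]
    exact Set.mem_iUnion₂.mpr ⟨a, Or.inl rfl, hA⟩
  refine ⟨?_, ?_, ?_, ?_⟩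
  · intro a A ha x hx hA
    exact hK1 x Aᶜ (hmono a 1 x ha hA) hx
  · intro a A B hAB x hx hB
    exact hx (hup a x Bᶜ Aᶜ hB (Set.compl_subset_compl.mpr hAB))
  · intro a b A x hx hA
    have := hK2 a b x Aᶜ hA
    exact hx (hup b x _ _ this (by intro y hy hy'; exact hy' hy))
  · intro a A
    apply Set.Subset.antisymm
    · intro x hx
      refine Set.mem_iInter₂.mpr fun b hb => fun hA => ?_
      have hba : b ≤ a := by
        obtain ⟨s, hs, hbs⟩ := hb {a} (le_sSup rfl)
        rwa [hs] at hbs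
      exact hx (hmono b a x hba hA)
    · intro x hx hA
      have h1 : α a x ⊆ α (sSup {b | totallyBelow b a}) x :=
        hmono _ _ x (le_sSup_totallyBelow a)
      rw [hK0] at h1
      obtain ⟨b, hb, hmem⟩ := Set.mem_iUnion₂.mp (h1 hA)
      exact Set.mem_iInter₂.mp hx b hb hmem
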